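/- If g(n) = O(n^a) as n → ∞, then f(n) = O(n^a · log n) as n → ∞; and if g(n) = Ω(n^a) as n → ∞ (i.e. there are c > 0 and N with g(n) ≥ c · n^a for n ≥ N), then f(n) = Ω(n^a · log n) as n → ∞. -/

import Mathlib

open Filter Asymptotics Topology

/-- comparison of `x^a` and `y^a` when `x ≤ y ≤ 2x`. -/
lemma aux_rpow_up (a : ℝ) {x y : ℝ} (hx : 0 < x) (hxy : x ≤ y) (hyx : y ≤ 2*x) :
    y ^ a ≤ 2^|a| * x^a := by
  rcases le_or_gt 0 a with h | h
  · calc y ^ a ≤ (2*x) ^ a := Real.rpow_le_rpow (by linarith) hyx h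
    _ = 2^a * x^a := Real.mul_rpow (by norm_num) hx.le
    _ ≤ 2^|a| * x^a := by rw [abs_of_nonneg h]
  · calc y ^ a ≤ x ^ a := Real.rpow_le_rpow_of_nonpos hx hxy h.le
    _ ≤ 2^|a| * x^a := by
        nlinarith [Real.one_le_rpow (x := (2:ℝ)) (by norm_num) (abs_nonneg a),
          Real.rpow_pos_of_pos hx a]

lemma aux_rpow_down (a : ℝ) {x y : ℝ} (hx : 0 < x) (hxy : x ≤ y) (hyx : y ≤ 2*x) :
    x ^ a ≤ 2^|a| * y^a := by
  rcases le_or_gt 0 a with h | h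
  · have h1 : x ^ a ≤ y ^ a := Real.rpow_le_rpow hx.le hxy h
    have h2 : (1:ℝ) ≤ 2^|a| := Real.one_le_rpow (by norm_num) (abs_nonneg a)
    nlinarith [Real.rpow_pos_of_pos (lt_of_lt_of_le hx hxy) a]
  · have hy : 0 < y := lt_of_lt_of_le hx hxy
    calc x ^ a ≤ (y/2) ^ a := Real.rpow_le_rpow_of_nonpos (by linarith) (by linarith) h.le
    _ = y^a / 2^a := Real.div_rpow hy.le (by norm_num) a
    _ = 2^(-a) * y^a := by rw [Real.rpow_neg (by norm_num)]; field_simp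
    _ = 2^|a| * y^a := by rw [abs_of_neg h]

lemma aux_tele (φ : ℕ → ℝ) (m n : ℕ) (h : m ≤ n) :
    ∑ k ∈ Finset.Ico m n, (φ (k+1) - φ k) = φ n - φ m := by
  rw [Finset.sum_Ico_eq_sub _ h, Finset.sum_range_sub, Finset.sum_range_sub]
  ring

lemma aux_H_low (n0 n : ℕ) (hn0 : 1 ≤ n0) (h : n0 ≤ n) :
    Real.log n - Real.log n0 ≤ ∑ k ∈ Finset.Ico n0 n, (1:ℝ)/k := by
  rw [← aux_tele (fun k => Real.log k) n0 n h]
  refine Finset.sum_le_sum fun k hk => ?_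
  obtain ⟨hk1, -⟩ := Finset.mem_Ico.mp hk
  have hk0 : 1 ≤ k := hn0.trans hk1
  have hkpos : (0:ℝ) < k := by exact_mod_cast Nat.lt_of_lt_of_le Nat.zero_lt_one hk0
  have h1 : Real.log (((k:ℕ)+1:ℕ)) - Real.log k = Real.log (((k:ℝ)+1)/k) := by
    rw [Real.log_div (by positivity) (ne_of_gt hkpos)]
    push_cast; ring
  calc Real.log ((k:ℕ)+1:ℕ) - Real.log k = Real.log (((k:ℝ)+1)/k) := h1
  _ ≤ 1/(k:ℝ) := by

      have := Real.log_le_sub_one_of_pos (x := ((k:ℝ)+1)/k) (by positivity)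
      have h2 : ((k:ℝ)+1)/k - 1 = 1/k := by field_simp; ring
      linarith

lemma aux_H_up (n0 n : ℕ) (hn0 : 1 ≤ n0) (h : n0 ≤ n) :
    ∑ k ∈ Finset.Ico n0 n, (1:ℝ)/k ≤ 1 + Real.log n := by
  have hlogn0 : 0 ≤ Real.log n0 := Real.log_natCast_nonneg n0
  have hlogn : 0 ≤ Real.log n := Real.log_natCast_nonneg n
  rcases eq_or_lt_of_le h with rfl | hlt
  · simp only [Finset.Ico_self, Finset.sum_empty]
    linarith
  rw [Finset.sum_eq_sum_Ico_succ_bot hlt]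
  have hfirst : (1:ℝ)/n0 ≤ 1 := by
    rw [div_le_one (by exact_mod_cast Nat.lt_of_lt_of_le Nat.zero_lt_one hn0)]
    exact_mod_cast hn0
  have hsecond : ∑ k ∈ Finset.Ico (n0+1) n, (1:ℝ)/k ≤ Real.log n := by
    have htel := aux_tele (fun k => Real.log ((k:ℝ)-1)) (n0+1) n hlt
    have hsum : ∑ k ∈ Finset.Ico (n0+1) n, (1:ℝ)/k ≤
        ∑ k ∈ Finset.Ico (n0+1) n, (Real.log (((k:ℕ)+1:ℝ)-1) - Real.log ((k:ℝ)-1)) := by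
      refine Finset.sum_le_sum fun k hk => ?_
      obtain ⟨hk1, -⟩ := Finset.mem_Ico.mp hk
      have hk2 : 2 ≤ k := by omega
      have hkpos : (0:ℝ) < k := by positivity
      have hkm1 : (0:ℝ) < (k:ℝ) - 1 := by
        have : (2:ℝ) ≤ k := by exact_mod_cast hk2
        linarith
      have hle := Real.log_le_sub_one_of_pos (x := ((k:ℝ)-1)/k) (by positivity)
      rw [Real.log_div (ne_of_gt hkm1) (ne_of_gt hkpos)] at hle
      have h2 : ((k:ℝ)-1)/k - 1 = -(1/k) := by field_simp; ring
      have h3 : ((k:ℕ)+1:ℝ)-1 = (k:ℝ) := by push_cast; ring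
      rw [h3]
      linarith
    have h4 : ∑ k ∈ Finset.Ico (n0+1) n, (Real.log (((k:ℕ)+1:ℝ)-1) - Real.log ((k:ℝ)-1))
        = Real.log ((n:ℝ)-1) - Real.log ((n0:ℝ)+1-1) := by
      have := aux_tele (fun k => Real.log ((k:ℝ)-1)) (n0+1) n hlt
      rw [show Real.log ((n0:ℝ)+1-1) = Real.log (((n0+1:ℕ):ℝ)-1) by push_cast; ring, ← this]
      refine Finset.sum_congr rfl fun k _ => ?_
      push_cast
      ring_nf
    rw [h4] at hsum
    have hn2 : (2:ℝ) ≤ n := by exact_mod_cast (by omega : 2 ≤ n)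
    have h5 : Real.log ((n:ℝ)-1) ≤ Real.log n :=
      Real.log_le_log (by linarith) (by linarith)
    have h6 : Real.log ((n0:ℝ)+1-1) = Real.log n0 := by norm_num
    rw [h6] at hsum
    linarith
  linarith

lemma aux_P_theta (n0 : ℕ) (hn0 : 1 ≤ n0) (a : ℝ) (ha : -(n0:ℝ) < a) :
    ∃ c1 c2 : ℝ, 0 < c1 ∧ 0 < c2 ∧ ∃ N : ℕ, ∀ n, N ≤ n →
      c1 * (n:ℝ)^a ≤ ∏ k ∈ Finset.Ico n0 n, (1 + a/(k:ℝ)) ∧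
      ∏ k ∈ Finset.Ico n0 n, (1 + a/(k:ℝ)) ≤ c2 * (n:ℝ)^a := by
  have hb : (0:ℝ) < n0 := by exact_mod_cast hn0
  have hba : (0:ℝ) < (n0:ℝ) + a := by linarith
  set L : ℝ := Real.Gamma n0 / Real.Gamma ((n0:ℝ) + a) with hL
  have hLpos : 0 < L := div_pos (Real.Gamma_pos_of_pos hb) (Real.Gamma_pos_of_pos hba)
  -- the ratio of Gamma sequences
  have hG : Tendsto (fun m => Real.GammaSeq (n0:ℝ) m / Real.GammaSeq ((n0:ℝ)+a) m)
      atTop (𝓝 L) :=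
    (Real.GammaSeq_tendsto_Gamma _).div (Real.GammaSeq_tendsto_Gamma _)
      (ne_of_gt (Real.Gamma_pos_of_pos hba))
  -- the rpow correction factor
  have hr : Tendsto (fun m : ℕ => ((m:ℝ)/((n0:ℝ)+m+1))^a) atTop (𝓝 1) := by
    have h1 : Tendsto (fun m : ℕ => (m:ℝ)/((n0:ℝ)+m+1)) atTop (𝓝 1) := by
      have := tendsto_natCast_div_add_atTop (𝕜 := ℝ) ((n0:ℝ)+1)
      refine this.congr fun m => ?_
      ring_nf
    have := h1.rpow_const (p := a) (Or.inl one_ne_zero)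
    simpa using this
  -- key identity
  have hkey : ∀ m : ℕ, 1 ≤ m →
      (∏ k ∈ Finset.Ico n0 (n0+m+1), (1 + a/(k:ℝ))) / ((n0+m+1:ℕ):ℝ)^a
        = ((m:ℝ)/((n0:ℝ)+m+1))^a *
          (Real.GammaSeq (n0:ℝ) m / Real.GammaSeq ((n0:ℝ)+a) m) := by
    intro m hm
    have hmpos : (0:ℝ) < m := by exact_mod_cast hm
    have hprod : (∏ k ∈ Finset.Ico n0 (n0+m+1), (1 + a/(k:ℝ)))
        = (∏ j ∈ Finset.range (m+1), ((n0:ℝ) + a + j)) /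
          (∏ j ∈ Finset.range (m+1), ((n0:ℝ) + j)) := by
      rw [Finset.prod_Ico_eq_prod_range]
      have : n0 + m + 1 - n0 = m + 1 := by omega
      rw [this, ← Finset.prod_div_distrib]
      refine Finset.prod_congr rfl fun j _ => ?_
      have hj : (0:ℝ) < (n0:ℝ) + j := by positivity
      field_simp
      push_cast
      ring
    have hA : (0:ℝ) < ∏ j ∈ Finset.range (m+1), ((n0:ℝ) + a + j) :=
      Finset.prod_pos fun j _ => by positivity
    have hB : (0:ℝ) < ∏ j ∈ Finset.range (m+1), ((n0:ℝ) + j) :=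
      Finset.prod_pos fun j _ => by positivity
    have hc : ((n0+m+1:ℕ):ℝ) = (n0:ℝ)+m+1 := by push_cast; ring
    rw [hprod, hc, Real.GammaSeq, Real.GammaSeq,
      Real.div_rpow hmpos.le (by positivity), Real.rpow_add hmpos (n0:ℝ) a]
    have hfac : (0:ℝ) < (Nat.factorial m : ℝ) := by positivity
    have hma : (0:ℝ) < (m:ℝ) ^ a := Real.rpow_pos_of_pos hmpos a
    have hmb : (0:ℝ) < (m:ℝ) ^ (n0:ℝ) := Real.rpow_pos_of_pos hmpos _
    have hca : (0:ℝ) < ((n0:ℝ)+m+1) ^ a := Real.rpow_pos_of_pos (by positivity) a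
    field_simp
  -- tendsto of the normalized product
  have htend : Tendsto (fun m : ℕ =>
      (∏ k ∈ Finset.Ico n0 (n0+m+1), (1 + a/(k:ℝ))) / ((n0+m+1:ℕ):ℝ)^a) atTop (𝓝 L) := by
    have h2 : Tendsto (fun m : ℕ => ((m:ℝ)/((n0:ℝ)+m+1))^a *
        (Real.GammaSeq (n0:ℝ) m / Real.GammaSeq ((n0:ℝ)+a) m)) atTop (𝓝 (1 * L)) :=
      hr.mul hG
    rw [one_mul] at h2
    refine h2.congr' ?_
    filter_upwards [eventually_ge_atTop 1] with m hm
    exact (hkey m hm).symm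
  have hup : ∀ᶠ m : ℕ in atTop,
      (∏ k ∈ Finset.Ico n0 (n0+m+1), (1 + a/(k:ℝ))) / ((n0+m+1:ℕ):ℝ)^a ≤ L + 1 :=
    htend.eventually_le_const (by linarith)
  have hlo : ∀ᶠ m : ℕ in atTop,
      L/2 ≤ (∏ k ∈ Finset.Ico n0 (n0+m+1), (1 + a/(k:ℝ))) / ((n0+m+1:ℕ):ℝ)^a :=
    htend.eventually_const_le (by linarith)
  obtain ⟨M, hM⟩ := (hlo.and hup).exists_forall_of_atTop
  refine ⟨L/2, L+1, by linarith, by linarith, n0 + M + 1, fun n hn => ?_⟩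
  obtain ⟨m, rfl⟩ : ∃ m, n = n0 + m + 1 := ⟨n - n0 - 1, by omega⟩
  have hm : M ≤ m := by omega
  obtain ⟨h1, h2⟩ := hM m hm
  have hpa : (0:ℝ) < ((n0+m+1:ℕ):ℝ)^a := Real.rpow_pos_of_pos (by positivity) a
  constructor
  · exact (le_div_iff₀ hpa).mp h1
  · exact (div_le_iff₀ hpa).mp h2

set_option maxHeartbeats 2000000

/-- If `g(n) = O(n^a)` then `f(n) = O(n^a · log n)`; and if `g(n) = Ω(n^a)`
(i.e. there are `c > 0` and `N` with `g(n) ≥ c·n^a` for `n ≥ N`), then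
`f(n) = Ω(n^a · log n)`. -/
theorem stmt_8 (n0 : ℕ) (hn0 : 1 ≤ n0) (a : ℝ) (ha : -(n0 : ℝ) < a)
    (f g : ℕ → ℝ)
    (hf : ∀ n, n0 ≤ n → 0 < f n) (hg : ∀ n, n0 ≤ n → 0 < g n)
    (hrec : ∀ n, n0 ≤ n → f (n + 1) = (1 + a / n) * f n + g n / n) :
    ((fun n : ℕ => g n) =O[atTop] (fun n : ℕ => (n : ℝ) ^ a) →
      (fun n : ℕ => f n) =O[atTop] fun n : ℕ => (n : ℝ) ^ a * Real.log n) ∧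
    ((∃ c : ℝ, 0 < c ∧ ∃ N : ℕ, ∀ n, N ≤ n → c * (n : ℝ) ^ a ≤ g n) →
      ∃ c : ℝ, 0 < c ∧ ∃ N : ℕ, ∀ n, N ≤ n → c * ((n : ℝ) ^ a * Real.log n) ≤ f n) := by
  set P : ℕ → ℝ := fun n => ∏ k ∈ Finset.Ico n0 n, (1 + a/(k:ℝ)) with hPdef
  set H : ℕ → ℝ := fun n => ∑ k ∈ Finset.Ico n0 n, (1:ℝ)/k with hHdef
  have hcoef : ∀ n : ℕ, n0 ≤ n → 0 < 1 + a/(n:ℝ) := by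
    intro n hn
    have h1 : (n0:ℝ) ≤ n := by exact_mod_cast hn
    have h2 : (0:ℝ) < n := by
      have : (1:ℝ) ≤ n0 := by exact_mod_cast hn0
      linarith
    have h3 : (0:ℝ) < (n:ℝ) + a := by linarith
    rw [show 1 + a/(n:ℝ) = ((n:ℝ)+a)/n by field_simp]
    positivity
  have hPpos : ∀ n : ℕ, 0 < P n := fun n =>
    Finset.prod_pos fun k hk => hcoef k (Finset.mem_Ico.mp hk).1
  have hPrec : ∀ n : ℕ, n0 ≤ n → P (n+1) = (1 + a/(n:ℝ)) * P n := by
    intro n hn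
    simp only [hPdef]
    rw [Finset.prod_Ico_succ_top hn, mul_comm]
  have hHrec : ∀ n : ℕ, n0 ≤ n → H (n+1) = H n + 1/(n:ℝ) := by
    intro n hn
    simp only [hHdef]
    rw [Finset.sum_Ico_succ_top hn]
  have hHnonneg : ∀ n : ℕ, 0 ≤ H n := fun n =>
    Finset.sum_nonneg fun k _ => by positivity
  have hHmono : ∀ m n : ℕ, m ≤ n → H m ≤ H n := by
    intro m n h
    refine Finset.sum_le_sum_of_subset_of_nonneg
      (Finset.Ico_subset_Ico le_rfl h) fun k _ _ => by positivity
  obtain ⟨c1, c2, hc1, hc2, N1, hN1⟩ := aux_P_theta n0 hn0 a ha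
  constructor
  · -- Big O part
    intro hO
    obtain ⟨K, hK⟩ := isBigO_iff.mp hO
    obtain ⟨M0, hM0⟩ := eventually_atTop.mp hK
    set K' : ℝ := |K| + 1 with hK'def
    have hK'pos : 0 < K' := by positivity
    have hgle : ∀ n : ℕ, max M0 n0 ≤ n → g n ≤ K' * (n:ℝ)^a := by
      intro n hn
      have hn1 : M0 ≤ n := le_trans (le_max_left _ _) hn
      have hn2 : n0 ≤ n := le_trans (le_max_right _ _) hn
      have hnpos : (0:ℝ) < n := by
        have : (1:ℕ) ≤ n := le_trans hn0 hn2
        exact_mod_cast Nat.lt_of_lt_of_le Nat.zero_lt_one this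
      have hna : (0:ℝ) < (n:ℝ)^a := Real.rpow_pos_of_pos hnpos a
      have := hM0 n hn1
      rw [Real.norm_eq_abs, Real.norm_eq_abs, abs_of_pos (hg n hn2),
        abs_of_pos hna] at this
      nlinarith [abs_nonneg K, le_abs_self K]
    set N : ℕ := max N1 (max M0 (n0+3)) with hNdef
    have hNn0 : n0 ≤ N := by omega
    have hNN1 : N1 ≤ N := le_max_left _ _
    have hPN : 0 < P N * (H N + 1) := by
      have := hPpos N; have := hHnonneg N; nlinarith
    set C : ℝ := max (K' * 2^|a| / c1) (f N / (P N * (H N + 1))) with hCdef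
    have hCpos : 0 < C := by
      have h1 : 0 < K' * 2^|a| / c1 := by positivity
      exact lt_of_lt_of_le h1 (le_max_left _ _)
    have claim : ∀ n, N ≤ n → f n ≤ C * (P n * (H n + 1)) := by
      intro n hn
      induction n, hn using Nat.le_induction with
      | base =>
        have h1 : f N / (P N * (H N + 1)) ≤ C := le_max_right _ _
        calc f N = f N / (P N * (H N + 1)) * (P N * (H N + 1)) := (div_mul_cancel₀ _ hPN.ne').symm
        _ ≤ C * (P N * (H N + 1)) := by nlinarith
      | succ n hn IH =>
        have hn0n : n0 ≤ n := le_trans hNn0 hn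
        have hx : (0:ℝ) < n := by
          have : (1:ℕ) ≤ n := le_trans hn0 hn0n
          exact_mod_cast Nat.lt_of_lt_of_le Nat.zero_lt_one this
        have hx1 : (1:ℝ) ≤ n := by
          have : (1:ℕ) ≤ n := le_trans hn0 hn0n
          exact_mod_cast this
        have hco := hcoef n hn0n
        have hgK : g n ≤ K' * (n:ℝ)^a := hgle n (by omega)
        have hPn1 : c1 * (((n+1:ℕ)):ℝ)^a ≤ P (n+1) := (hN1 (n+1) (by omega)).1
        have hcast : (((n+1:ℕ)):ℝ) = (n:ℝ)+1 := by push_cast; ring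
        rw [hcast] at hPn1
        have hna : (n:ℝ)^a ≤ 2^|a| * ((n:ℝ)+1)^a :=
          aux_rpow_down a hx (by linarith) (by linarith)
        have hKC : K' * (n:ℝ)^a ≤ C * P (n+1) := by
          have h1 : K' * 2^|a| / c1 ≤ C := le_max_left _ _
          have h2 : 0 < ((n:ℝ)+1)^a := Real.rpow_pos_of_pos (by linarith) a
          have h3 : 0 < P (n+1) := hPpos (n+1)
          calc K' * (n:ℝ)^a ≤ K' * (2^|a| * ((n:ℝ)+1)^a) := by nlinarith
          _ = (K' * 2^|a| / c1) * (c1 * ((n:ℝ)+1)^a) := by field_simp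
          _ ≤ C * (c1 * ((n:ℝ)+1)^a) :=
              mul_le_mul_of_nonneg_right h1 (mul_nonneg hc1.le h2.le)
          _ ≤ C * P (n+1) := by nlinarith
        have t1 : (1+a/(n:ℝ)) * f n ≤ (1+a/(n:ℝ)) * (C * (P n * (H n + 1))) :=
          mul_le_mul_of_nonneg_left IH hco.le
        have t3 : (1+a/(n:ℝ)) * (C * (P n * (H n + 1))) = C * (P (n+1) * (H n + 1)) := by
          rw [hPrec n hn0n]; ring
        have t2 : g n / (n:ℝ) ≤ (C * P (n+1)) / (n:ℝ) := by
          gcongr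
          linarith
        calc f (n+1) = (1 + a/(n:ℝ)) * f n + g n / n := hrec n hn0n
        _ ≤ C * (P (n+1) * (H n + 1)) + (C * P (n+1)) / (n:ℝ) := by
            rw [← t3]; linarith
        _ = C * (P (n+1) * (H n + 1 + 1/(n:ℝ))) := by ring
        _ = C * (P (n+1) * (H (n+1) + 1)) := by rw [hHrec n hn0n]; ring
    rw [isBigO_iff]
    refine ⟨3 * C * c2, ?_⟩
    filter_upwards [eventually_ge_atTop (max N 3)] with n hn
    have hnN : N ≤ n := le_trans (le_max_left _ _) hn
    have hn3 : (3:ℕ) ≤ n := le_trans (le_max_right _ _) hn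
    have hn0n : n0 ≤ n := le_trans hNn0 hnN
    have hx : (0:ℝ) < n := by
      have : (1:ℕ) ≤ n := le_trans hn0 hn0n
      exact_mod_cast Nat.lt_of_lt_of_le Nat.zero_lt_one this
    have hn3' : (3:ℝ) ≤ n := by exact_mod_cast hn3
    have hlog1 : 1 ≤ Real.log n := by
      rw [Real.le_log_iff_exp_le hx]
      calc Real.exp 1 ≤ 2.7182818286 := Real.exp_one_lt_d9.le
      _ ≤ (n:ℝ) := by linarith
    have hfle : f n ≤ C * (P n * (H n + 1)) := claim n hnN
    have hPup : P n ≤ c2 * (n:ℝ)^a := (hN1 n (le_trans hNN1 hnN)).2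
    have hHup : H n + 1 ≤ 3 * Real.log n := by
      have := aux_H_up n0 n hn0 hn0n
      simp only [hHdef]
      linarith
    have hnapos : (0:ℝ) < (n:ℝ)^a := Real.rpow_pos_of_pos hx a
    have hmul : P n * (H n + 1) ≤ (c2 * (n:ℝ)^a) * (3 * Real.log n) := by
      have h0 : 0 ≤ H n + 1 := by have := hHnonneg n; linarith
      have h1 : 0 ≤ c2 * (n:ℝ)^a := by positivity
      exact mul_le_mul hPup hHup h0 h1
    have hfinal : f n ≤ 3 * C * c2 * ((n:ℝ)^a * Real.log n) := by
      have := mul_le_mul_of_nonneg_left hmul hCpos.le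
      calc f n ≤ C * (P n * (H n + 1)) := hfle
      _ ≤ C * ((c2 * (n:ℝ)^a) * (3 * Real.log n)) := this
      _ = 3 * C * c2 * ((n:ℝ)^a * Real.log n) := by ring
    rw [Real.norm_eq_abs, Real.norm_eq_abs, abs_of_pos (hf n hn0n),
      abs_of_pos (by nlinarith : (0:ℝ) < (n:ℝ)^a * Real.log n)]
    exact hfinal
  · -- Omega part
    rintro ⟨c, hc, M, hM⟩
    set N : ℕ := max N1 (max M (n0+1)) with hNdef
    have hNn0 : n0 ≤ N := by omega
    have hNN1 : N1 ≤ N := le_max_left _ _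
    have h2abs : (0:ℝ) < (2:ℝ)^|a| := Real.rpow_pos_of_pos (by norm_num) _
    set ε : ℝ := c / (c2 * 2^|a|) with hεdef
    have hεpos : 0 < ε := by positivity
    have claim2 : ∀ n, N ≤ n → ε * (P n * (H n - H N)) ≤ f n := by
      intro n hn
      induction n, hn using Nat.le_induction with
      | base =>
        simp only [sub_self, mul_zero, zero_mul]
        exact (hf N hNn0).le
      | succ n hn IH =>
        have hn0n : n0 ≤ n := le_trans hNn0 hn
        have hx : (0:ℝ) < n := by
          have : (1:ℕ) ≤ n := le_trans hn0 hn0n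
          exact_mod_cast Nat.lt_of_lt_of_le Nat.zero_lt_one this
        have hx1 : (1:ℝ) ≤ n := by
          have : (1:ℕ) ≤ n := le_trans hn0 hn0n
          exact_mod_cast this
        have hco := hcoef n hn0n
        have hPn1 : P (n+1) ≤ c2 * (((n+1:ℕ)):ℝ)^a := (hN1 (n+1) (by omega)).2
        have hcast : (((n+1:ℕ)):ℝ) = (n:ℝ)+1 := by push_cast; ring
        rw [hcast] at hPn1
        have hna : ((n:ℝ)+1)^a ≤ 2^|a| * (n:ℝ)^a :=
          aux_rpow_up a hx (by linarith) (by linarith)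
        have hgc : c * (n:ℝ)^a ≤ g n := hM n (by omega)
        have hεP : ε * P (n+1) ≤ g n := by
          have h2 : 0 < (n:ℝ)^a := Real.rpow_pos_of_pos hx a
          calc ε * P (n+1) ≤ ε * (c2 * ((n:ℝ)+1)^a) :=
            mul_le_mul_of_nonneg_left hPn1 hεpos.le
          _ ≤ ε * (c2 * (2^|a| * (n:ℝ)^a)) := by
              refine mul_le_mul_of_nonneg_left ?_ hεpos.le
              exact mul_le_mul_of_nonneg_left hna hc2.le
          _ = c * (n:ℝ)^a := by
              rw [hεdef]; field_simp
          _ ≤ g n := hgc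
        have t1 : (1+a/(n:ℝ)) * (ε * (P n * (H n - H N))) ≤ (1+a/(n:ℝ)) * f n :=
          mul_le_mul_of_nonneg_left IH hco.le
        have t3 : (1+a/(n:ℝ)) * (ε * (P n * (H n - H N))) = ε * (P (n+1) * (H n - H N)) := by
          rw [hPrec n hn0n]; ring
        have t2 : (ε * P (n+1)) / (n:ℝ) ≤ g n / (n:ℝ) := by
          gcongr
        calc ε * (P (n+1) * (H (n+1) - H N))
            = ε * (P (n+1) * (H n - H N)) + (ε * P (n+1)) / (n:ℝ) := by
              rw [hHrec n hn0n]; ring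
        _ ≤ (1+a/(n:ℝ)) * f n + g n / (n:ℝ) := by rw [← t3]; linarith
        _ = f (n+1) := (hrec n hn0n).symm
    set B : ℝ := Real.log n0 + H N with hBdef
    have hBnn : 0 ≤ B := by
      have := Real.log_natCast_nonneg n0
      have := hHnonneg N
      simp only [hBdef]; linarith
    refine ⟨ε * c1 / 2, by positivity, max N (max 3 (⌈Real.exp (2*B)⌉₊ + 1)), fun n hn => ?_⟩
    have hnN : N ≤ n := le_trans (le_max_left _ _) hn
    have hn0n : n0 ≤ n := le_trans hNn0 hnN
    have hx : (0:ℝ) < n := by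
      have : (1:ℕ) ≤ n := le_trans hn0 hn0n
      exact_mod_cast Nat.lt_of_lt_of_le Nat.zero_lt_one this
    have hceil : (⌈Real.exp (2*B)⌉₊ : ℕ) ≤ n := by omega
    have hexp : Real.exp (2*B) ≤ (n:ℝ) :=
      le_trans (Nat.le_ceil _) (by exact_mod_cast hceil)
    have hlogB : 2*B ≤ Real.log n := (Real.le_log_iff_exp_le hx).mpr hexp
    have hHlow : Real.log n - Real.log n0 ≤ H n := by
      have := aux_H_low n0 n hn0 hn0n
      simp only [hHdef]
      linarith
    have hHN : H n - H N ≥ Real.log n / 2 := by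
      simp only [hBdef] at hlogB
      linarith
    have hPlow : c1 * (n:ℝ)^a ≤ P n := (hN1 n (le_trans hNN1 hnN)).1
    have hlognn : 0 ≤ Real.log n := by linarith
    have hmul : (c1 * (n:ℝ)^a) * (Real.log n / 2) ≤ P n * (H n - H N) := by
      have h1 : 0 ≤ Real.log n / 2 := by linarith
      have h2 : 0 ≤ P n := (hPpos n).le
      exact mul_le_mul hPlow hHN h1 h2
    calc ε * c1 / 2 * ((n:ℝ)^a * Real.log n)
        = ε * ((c1 * (n:ℝ)^a) * (Real.log n / 2)) := by ring
    _ ≤ ε * (P n * (H n - H N)) := mul_le_mul_of_nonneg_left hmul hεpos.le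
    _ ≤ f n := claim2 n hnN
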